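/- There exists a constant C > 0, depending only on γ and independent of R, such that for all R > 0, ρ > 0 and u ∈ ℝ: |η^{ψ_R}(ρ, u) − η^{ψ_E}(ρ, u)| ≤ C ρ(|u| + ρ^θ)² ∫_S (1 − s²)^λ ds and |q^{ψ_R}(ρ, u) − q^{ψ_E}(ρ, u)| ≤ C ρ(|u| + ρ^θ)³ ∫_S (1 − s²)^λ ds, where ψ_E(s) = s²/2 and S = {s ∈ [−1, 1] : |u + ρ^θ s| ≥ R}. -/

import Mathlib

open Real MeasureTheory

/-- `θ = (γ − 1)/2`. -/
noncomputable def thetaExp (γ : ℝ) : ℝ := (γ - 1) / 2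

/-- `λ = (3 − γ)/(2(γ − 1))`. -/
noncomputable def lamExp (γ : ℝ) : ℝ := (3 - γ) / (2 * (γ - 1))

/-- The weak entropy of the isentropic Euler system with polytropic pressure, generated by `ψ`:
`η^ψ(ρ, u) = ρ ∫_{−1}^{1} ψ(u + ρ^θ s)(1 − s²)^λ ds`. -/
noncomputable def entropy (γ : ℝ) (ψ : ℝ → ℝ) (ρ u : ℝ) : ℝ :=
  ρ * ∫ s in (-1:ℝ)..1, ψ (u + ρ ^ thetaExp γ * s) * (1 - s ^ 2) ^ lamExp γ

/-- The weak entropy flux generated by `ψ`: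
`q^ψ(ρ, u) = ρ ∫_{−1}^{1} (u + θρ^θ s) ψ(u + ρ^θ s)(1 − s²)^λ ds`. -/
noncomputable def entropyFlux (γ : ℝ) (ψ : ℝ → ℝ) (ρ u : ℝ) : ℝ :=
  ρ * ∫ s in (-1:ℝ)..1,
    (u + thetaExp γ * ρ ^ thetaExp γ * s) * ψ (u + ρ ^ thetaExp γ * s) * (1 - s ^ 2) ^ lamExp γ

/-- The truncated second derivative: `h_R(w) = 1` if `|w| ≤ R`, `(2R − |w|)/R` if
`R ≤ |w| ≤ 2R`, and `0` if `|w| ≥ 2R`. -/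
noncomputable def hTrunc (R w : ℝ) : ℝ :=
  if |w| ≤ R then 1 else if |w| ≤ 2 * R then (2 * R - |w|) / R else 0

/-- The truncated quadratic generating function `ψ_R(s) = ∫₀^s ∫₀^y h_R(w) dw dy`. -/
noncomputable def psiR (R s : ℝ) : ℝ := ∫ y in (0:ℝ)..s, ∫ w in (0:ℝ)..y, hTrunc R w

section AuxLemmas

variable {R : ℝ}

lemma hTrunc_nonneg (hR : 0 < R) (w : ℝ) : 0 ≤ hTrunc R w := by
  unfold hTrunc
  split_ifs with h1 h2
  · norm_num
  · exact div_nonneg (by linarith) hR.le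
  · exact le_rfl

lemma hTrunc_le_one (hR : 0 < R) (w : ℝ) : hTrunc R w ≤ 1 := by
  unfold hTrunc
  split_ifs with h1 h2
  · exact le_rfl
  · rw [div_le_one hR]; push_neg at h1; linarith
  · norm_num

lemma hTrunc_eq_one {w : ℝ} (h : |w| ≤ R) : hTrunc R w = 1 := if_pos h

lemma hTrunc_closed (hR : 0 < R) (w : ℝ) :
    hTrunc R w = min 1 (max 0 ((2 * R - |w|) / R)) := by
  unfold hTrunc
  split_ifs with h1 h2
  · have h1' : (1:ℝ) ≤ (2 * R - |w|) / R := by rw [le_div_iff₀ hR]; linarith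
    rw [max_eq_right (by linarith), min_eq_left h1']
  · push_neg at h1
    have h0 : (0:ℝ) ≤ (2 * R - |w|) / R := div_nonneg (by linarith) hR.le
    have hle : (2 * R - |w|) / R ≤ 1 := by rw [div_le_one hR]; linarith
    rw [max_eq_right h0, min_eq_right hle]
  · push_neg at h1 h2
    have : (2 * R - |w|) / R ≤ 0 := div_nonpos_of_nonpos_of_nonneg (by linarith) hR.le
    rw [max_eq_left this, min_eq_right (by norm_num)]

lemma hTrunc_cont (hR : 0 < R) : Continuous (hTrunc R) := by
  have : hTrunc R = fun w => min 1 (max 0 ((2 * R - |w|) / R)) := funext (hTrunc_closed hR)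
  rw [this]
  exact continuous_const.min
    (continuous_const.max ((continuous_const.sub continuous_abs).div_const R))

lemma abs_le_of_mem_uIcc_zero {y w : ℝ} (hw : w ∈ Set.uIcc 0 y) : |w| ≤ |y| := by
  rcases le_total 0 y with h | h
  · rw [Set.uIcc_of_le h] at hw
    rw [abs_of_nonneg hw.1, abs_of_nonneg h]; exact hw.2
  · rw [Set.uIcc_of_ge h] at hw
    rw [abs_of_nonpos hw.2, abs_of_nonpos h]; linarith [hw.1]

lemma gR_cont (hR : 0 < R) : Continuous (fun y => ∫ w in (0:ℝ)..y, hTrunc R w) :=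
  intervalIntegral.continuous_primitive (fun a b => ((hTrunc_cont hR).intervalIntegrable a b)) 0

lemma gR_eq_id {y : ℝ} (h : |y| ≤ R) : (∫ w in (0:ℝ)..y, hTrunc R w) = y := by
  rw [intervalIntegral.integral_congr (g := fun _ => (1:ℝ))
    (fun w hw => hTrunc_eq_one ((abs_le_of_mem_uIcc_zero hw).trans h))]
  simp

lemma gR_abs_le (hR : 0 < R) (y : ℝ) : |∫ w in (0:ℝ)..y, hTrunc R w| ≤ |y| := by
  have := intervalIntegral.norm_integral_le_of_norm_le_const (a := 0) (b := y) (C := 1)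
    (f := hTrunc R) (fun x _ => by
      rw [Real.norm_eq_abs, abs_of_nonneg (hTrunc_nonneg hR x)]; exact hTrunc_le_one hR x)
  simpa using this

lemma gR_nonneg (hR : 0 < R) {y : ℝ} (hy : 0 ≤ y) : 0 ≤ ∫ w in (0:ℝ)..y, hTrunc R w :=
  intervalIntegral.integral_nonneg hy (fun w _ => hTrunc_nonneg hR w)

lemma gR_nonpos (hR : 0 < R) {y : ℝ} (hy : y ≤ 0) : (∫ w in (0:ℝ)..y, hTrunc R w) ≤ 0 := by
  rw [← neg_neg (∫ w in (0:ℝ)..y, hTrunc R w), ← intervalIntegral.integral_symm]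
  have : 0 ≤ ∫ w in y..(0:ℝ), hTrunc R w :=
    intervalIntegral.integral_nonneg hy (fun w _ => hTrunc_nonneg hR w)
  linarith

lemma psiR_cont (hR : 0 < R) : Continuous (psiR R) :=
  intervalIntegral.continuous_primitive (fun a b => ((gR_cont hR).intervalIntegrable a b)) 0

lemma psiR_eq_sq (hR : 0 < R) {s : ℝ} (hs : |s| ≤ R) : psiR R s = s ^ 2 / 2 := by
  unfold psiR
  rw [intervalIntegral.integral_congr (g := fun y => y)
    (fun y hy => gR_eq_id ((abs_le_of_mem_uIcc_zero hy).trans hs))]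
  rw [integral_id]
  ring

lemma psiR_nonneg (hR : 0 < R) (s : ℝ) : 0 ≤ psiR R s := by
  unfold psiR
  rcases le_total 0 s with h | h
  · exact intervalIntegral.integral_nonneg h (fun y hy => gR_nonneg hR hy.1)
  · rw [intervalIntegral.integral_symm s 0]
    have h1 : (∫ y in s..(0:ℝ), ∫ w in (0:ℝ)..y, hTrunc R w) ≤ ∫ _ in s..(0:ℝ), (0:ℝ) :=
      intervalIntegral.integral_mono_on h
        ((gR_cont hR).intervalIntegrable _ _) intervalIntegrable_const
        (fun y hy => gR_nonpos hR hy.2)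
    rw [intervalIntegral.integral_zero] at h1
    linarith

lemma psiR_le_sq (hR : 0 < R) (s : ℝ) : psiR R s ≤ s ^ 2 / 2 := by
  unfold psiR
  rcases le_total 0 s with h | h
  · have : (∫ y in (0:ℝ)..s, ∫ w in (0:ℝ)..y, hTrunc R w) ≤ ∫ y in (0:ℝ)..s, y :=
      intervalIntegral.integral_mono_on h ((gR_cont hR).intervalIntegrable _ _)
        (by exact (continuous_id).intervalIntegrable _ _)
        (fun y hy => by
          have := gR_abs_le hR y
          rw [abs_of_nonneg hy.1] at this
          exact (abs_le.mp this).2)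
    rw [integral_id] at this
    calc _ ≤ (s ^ 2 - 0 ^ 2) / 2 := this
    _ = s ^ 2 / 2 := by ring
  · rw [intervalIntegral.integral_symm s 0]
    have : (∫ y in s..(0:ℝ), y) ≤ ∫ y in s..(0:ℝ), ∫ w in (0:ℝ)..y, hTrunc R w :=
      intervalIntegral.integral_mono_on h
        (by exact (continuous_id).intervalIntegrable _ _)
        ((gR_cont hR).intervalIntegrable _ _)
        (fun y hy => by
          have := gR_abs_le hR y
          rw [abs_of_nonpos hy.2] at this
          linarith [(abs_le.mp this).1])
    rw [integral_id] at this
    have h2 : (0 ^ 2 - s ^ 2) / 2 ≤ ∫ y in s..(0:ℝ), ∫ w in (0:ℝ)..y, hTrunc R w := this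
    nlinarith [h2]

lemma psiR_sub_abs_le (hR : 0 < R) (s : ℝ) : |psiR R s - s ^ 2 / 2| ≤ s ^ 2 / 2 := by
  rw [abs_sub_comm, abs_of_nonneg (by linarith [psiR_le_sq hR s])]
  linarith [psiR_nonneg hR s]

lemma weight_integrable {l : ℝ} (hl : -1 < l) :
    IntervalIntegrable (fun s : ℝ => (1 - s ^ 2) ^ l) volume (-1) 1 := by
  have hmeas : Measurable (fun s : ℝ => (1 - s ^ 2) ^ l) := by fun_prop
  have h1 : IntervalIntegrable (fun s : ℝ => (1 - s) ^ l) volume 0 1 := by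
    have h0 := (intervalIntegral.intervalIntegrable_rpow' (a := 0) (b := 2) hl).comp_sub_left 1
    norm_num at h0
    exact h0.mono_set (by
      apply Set.uIcc_subset_uIcc <;> rw [Set.mem_uIcc] <;> norm_num)
  set c := max 1 ((2:ℝ) ^ l) with hc
  have hc0 : (0:ℝ) ≤ c := le_trans zero_le_one (le_max_left _ _)
  have hkey : ∀ s ∈ Set.uIoc (0:ℝ) 1, ‖(1 - s ^ 2) ^ l‖ ≤ c * (1 - s) ^ l := by
    intro s hs
    rw [Set.uIoc_of_le zero_le_one] at hs
    obtain ⟨hs0, hs1⟩ := hs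
    have h1s : (0:ℝ) ≤ 1 - s := by linarith
    have h1p : (0:ℝ) ≤ 1 + s := by linarith
    rw [Real.norm_eq_abs, abs_of_nonneg (Real.rpow_nonneg (by nlinarith) l)]
    have hfact : (1 - s ^ 2) ^ l = (1 - s) ^ l * (1 + s) ^ l := by
      rw [← Real.mul_rpow h1s h1p]; ring_nf
    rw [hfact]
    have hps : (1 + s) ^ l ≤ c := by
      rcases le_or_gt 0 l with hl0 | hl0
      · exact le_trans (Real.rpow_le_rpow h1p (by linarith) hl0) (le_max_right _ _)
      · exact le_trans (Real.rpow_le_one_of_one_le_of_nonpos (by linarith) hl0.le)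
          (le_max_left _ _)
    calc (1 - s) ^ l * (1 + s) ^ l ≤ (1 - s) ^ l * c :=
          mul_le_mul_of_nonneg_left hps (Real.rpow_nonneg h1s l)
    _ = c * (1 - s) ^ l := mul_comm _ _
  have half1 : IntervalIntegrable (fun s : ℝ => (1 - s ^ 2) ^ l) volume 0 1 := by
    refine (h1.const_mul c).mono_fun' hmeas.aestronglyMeasurable ?_
    exact (ae_restrict_mem measurableSet_uIoc).mono hkey
  have half2 : IntervalIntegrable (fun s : ℝ => (1 - s ^ 2) ^ l) volume (-1) 0 := by
    have h2 := (IntervalIntegrable.iff_comp_neg (by simp)).mp half1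
    have heq : (fun x : ℝ => (1 - (-x) ^ 2) ^ l) = fun x : ℝ => (1 - x ^ 2) ^ l := by
      funext x; rw [neg_sq]
    rw [heq] at h2
    have h3 := h2.symm
    norm_num at h3
    exact h3
  exact half2.trans half1

/-- The core estimate: for any continuous prefactor `F` bounded by `K` on `[-1,1]`,
the difference of the two weighted integrals is controlled by the integral of the
weight over the truncation region. -/
lemma core_estimate {R a l : ℝ} (hR : 0 < R) (ha : 0 < a) (hl : -1 < l) (u K : ℝ)
    (hK : 0 ≤ K) (F : ℝ → ℝ) (hF : Continuous F)
    (hFb : ∀ s ∈ Set.Icc (-1:ℝ) 1, |F s| ≤ K) :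
    |(∫ s in (-1:ℝ)..1, F s * psiR R (u + a * s) * (1 - s ^ 2) ^ l) -
      ∫ s in (-1:ℝ)..1, F s * ((u + a * s) ^ 2 / 2) * (1 - s ^ 2) ^ l| ≤
    K * (|u| + a) ^ 2 / 2 *
      ∫ s in {s : ℝ | s ∈ Set.Icc (-1:ℝ) 1 ∧ R ≤ |u + a * s|}, (1 - s ^ 2) ^ l := by
  set M := |u| + a with hMdef
  have hM : 0 < M := add_pos_of_nonneg_of_pos (abs_nonneg u) ha
  set w : ℝ → ℝ := fun s => (1 - s ^ 2) ^ l with hwdef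
  have hwmeas : Measurable w := by fun_prop
  have hwInt : IntervalIntegrable w volume (-1) 1 := weight_integrable hl
  have hwIoc : IntegrableOn w (Set.Ioc (-1:ℝ) 1) :=
    (intervalIntegrable_iff_integrableOn_Ioc_of_le (by norm_num)).mp hwInt
  have hwIcc : IntegrableOn w (Set.Icc (-1:ℝ) 1) :=
    (integrableOn_Icc_iff_integrableOn_Ioc (by simp)).mpr hwIoc
  have hwnn : ∀ s ∈ Set.Icc (-1:ℝ) 1, 0 ≤ w s := fun s hs =>
    Real.rpow_nonneg (by nlinarith [hs.1, hs.2]) l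
  have hTmeas : MeasurableSet {s : ℝ | R ≤ |u + a * s|} :=
    measurableSet_le measurable_const ((measurable_const.add (measurable_id.const_mul _)).abs)
  have hSmeas : MeasurableSet {s : ℝ | s ∈ Set.Icc (-1:ℝ) 1 ∧ R ≤ |u + a * s|} :=
    measurableSet_Icc.inter hTmeas
  have hSsub : {s : ℝ | s ∈ Set.Icc (-1:ℝ) 1 ∧ R ≤ |u + a * s|} ⊆ Set.Icc (-1:ℝ) 1 :=
    fun s hs => hs.1
  have hwS : IntegrableOn w {s : ℝ | s ∈ Set.Icc (-1:ℝ) 1 ∧ R ≤ |u + a * s|} :=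
    hwIcc.mono_set hSsub
  have hxle : ∀ s ∈ Set.Icc (-1:ℝ) 1, |u + a * s| ≤ M := by
    intro s hs
    have habs : |s| ≤ 1 := abs_le.mpr ⟨hs.1, hs.2⟩
    calc |u + a * s| ≤ |u| + |a * s| := abs_add_le _ _
    _ = |u| + a * |s| := by rw [abs_mul, abs_of_nonneg ha.le]
    _ ≤ |u| + a * 1 := by nlinarith
    _ = M := by rw [hMdef]; ring
  have hcont1 : Continuous fun s => F s * psiR R (u + a * s) :=
    hF.mul ((psiR_cont hR).comp (continuous_const.add (continuous_const.mul continuous_id)))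
  have hcont2 : Continuous fun s => F s * ((u + a * s) ^ 2 / 2) := by fun_prop
  have I1 : IntervalIntegrable (fun s => F s * psiR R (u + a * s) * w s) volume (-1) 1 :=
    hwInt.continuousOn_mul hcont1.continuousOn
  have I2 : IntervalIntegrable (fun s => F s * ((u + a * s) ^ 2 / 2) * w s) volume (-1) 1 :=
    hwInt.continuousOn_mul hcont2.continuousOn
  rw [← intervalIntegral.integral_sub I1 I2]
  refine le_trans (intervalIntegral.abs_integral_le_integral_abs (by norm_num)) ?_
  rw [intervalIntegral.integral_of_le (by norm_num : (-1:ℝ) ≤ 1)]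
  have hDInt : IntegrableOn
      (fun s => |F s * psiR R (u + a * s) * w s - F s * ((u + a * s) ^ 2 / 2) * w s|)
      (Set.Ioc (-1:ℝ) 1) := ((I1.sub I2).1).abs
  have hindInt : Integrable
      ({s : ℝ | R ≤ |u + a * s|}.indicator (fun s => K * M ^ 2 / 2 * w s))
      (volume.restrict (Set.Ioc (-1:ℝ) 1)) :=
    (hwIoc.const_mul (K * M ^ 2 / 2)).indicator hTmeas
  have hstep1 : (∫ s in Set.Ioc (-1:ℝ) 1,
      |F s * psiR R (u + a * s) * w s - F s * ((u + a * s) ^ 2 / 2) * w s|) ≤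
      ∫ s in Set.Ioc (-1:ℝ) 1,
      {s : ℝ | R ≤ |u + a * s|}.indicator (fun s => K * M ^ 2 / 2 * w s) s := by
    refine setIntegral_mono_on hDInt hindInt measurableSet_Ioc ?_
    intro s hs
    have hsIcc : s ∈ Set.Icc (-1:ℝ) 1 := Set.Ioc_subset_Icc_self hs
    by_cases hsT : s ∈ {s : ℝ | R ≤ |u + a * s|}
    · rw [Set.indicator_of_mem hsT]
      have hDeq : F s * psiR R (u + a * s) * w s - F s * ((u + a * s) ^ 2 / 2) * w s
          = F s * (psiR R (u + a * s) - (u + a * s) ^ 2 / 2) * w s := by ring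
      rw [hDeq, abs_mul, abs_mul]
      have h1 : |F s| ≤ K := hFb s hsIcc
      have h2 : |psiR R (u + a * s) - (u + a * s) ^ 2 / 2| ≤ M ^ 2 / 2 := by
        refine (psiR_sub_abs_le hR _).trans ?_
        have hx := hxle s hsIcc
        nlinarith [abs_nonneg (u + a * s), sq_abs (u + a * s)]
      rw [abs_of_nonneg (hwnn s hsIcc)]
      calc |F s| * |psiR R (u + a * s) - (u + a * s) ^ 2 / 2| * w s
          ≤ K * (M ^ 2 / 2) * w s := by
            apply mul_le_mul_of_nonneg_right _ (hwnn s hsIcc)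
            exact mul_le_mul h1 h2 (abs_nonneg _) hK
      _ = K * M ^ 2 / 2 * w s := by ring
    · rw [Set.indicator_of_notMem hsT]
      have hlt : |u + a * s| ≤ R := by
        simp only [Set.mem_setOf_eq, not_le] at hsT; exact hsT.le
      rw [psiR_eq_sq hR hlt]
      simp
  refine hstep1.trans ?_
  rw [setIntegral_indicator hTmeas]
  have hstep3 : (∫ s in Set.Ioc (-1:ℝ) 1 ∩ {s : ℝ | R ≤ |u + a * s|},
      K * M ^ 2 / 2 * w s) ≤
      ∫ s in {s : ℝ | s ∈ Set.Icc (-1:ℝ) 1 ∧ R ≤ |u + a * s|}, K * M ^ 2 / 2 * w s := by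
    refine setIntegral_mono_set (hwS.const_mul _) ?_ (HasSubset.Subset.eventuallyLE ?_)
    · filter_upwards [ae_restrict_mem hSmeas] with s hs
      exact mul_nonneg (by positivity) (hwnn s hs.1)
    · intro s hs
      exact ⟨Set.Ioc_subset_Icc_self hs.1, hs.2⟩
  refine hstep3.trans ?_
  rw [integral_const_mul]

end AuxLemmas

/-- There is a constant `C > 0`, depending only on `γ` and independent of `R`, with
`|η^{ψ_R}(ρ,u) − η^{ψ_E}(ρ,u)| ≤ C ρ(|u| + ρ^θ)² ∫_S (1 − s²)^λ ds` and
`|q^{ψ_R}(ρ,u) − q^{ψ_E}(ρ,u)| ≤ C ρ(|u| + ρ^θ)³ ∫_S (1 − s²)^λ ds`,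
where `ψ_E(s) = s²/2` and `S = {s ∈ [−1,1] : |u + ρ^θ s| ≥ R}`. -/
theorem entropy_psiR_minus_mechanical_bounds (γ : ℝ) (hγ : 1 < γ) :
    ∃ C : ℝ, 0 < C ∧ ∀ R : ℝ, 0 < R → ∀ ρ : ℝ, 0 < ρ → ∀ u : ℝ,
      |entropy γ (psiR R) ρ u - entropy γ (fun s => s ^ 2 / 2) ρ u| ≤
        C * ρ * (|u| + ρ ^ thetaExp γ) ^ 2 *
          ∫ s in {s : ℝ | s ∈ Set.Icc (-1 : ℝ) 1 ∧ R ≤ |u + ρ ^ thetaExp γ * s|},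
            (1 - s ^ 2) ^ lamExp γ ∧
      |entropyFlux γ (psiR R) ρ u - entropyFlux γ (fun s => s ^ 2 / 2) ρ u| ≤
        C * ρ * (|u| + ρ ^ thetaExp γ) ^ 3 *
          ∫ s in {s : ℝ | s ∈ Set.Icc (-1 : ℝ) 1 ∧ R ≤ |u + ρ ^ thetaExp γ * s|},
            (1 - s ^ 2) ^ lamExp γ := by
  have hθ : 0 < thetaExp γ := by rw [thetaExp]; linarith
  refine ⟨1 + thetaExp γ, by linarith, ?_⟩
  intro R hR ρ hρ u
  have hl : -1 < lamExp γ := by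
    rw [lamExp, lt_div_iff₀ (by linarith : (0:ℝ) < 2 * (γ - 1))]
    nlinarith
  have ha : 0 < ρ ^ thetaExp γ := Real.rpow_pos_of_pos hρ _
  have hM : 0 < |u| + ρ ^ thetaExp γ := add_pos_of_nonneg_of_pos (abs_nonneg u) ha
  have hSnn : 0 ≤ ∫ s in {s : ℝ | s ∈ Set.Icc (-1 : ℝ) 1 ∧ R ≤ |u + ρ ^ thetaExp γ * s|},
      (1 - s ^ 2) ^ lamExp γ := by
    refine setIntegral_nonneg (measurableSet_Icc.inter
      (measurableSet_le measurable_const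
        ((measurable_const.add (measurable_id.const_mul _)).abs))) ?_
    intro s hs
    exact Real.rpow_nonneg (by nlinarith [hs.1.1, hs.1.2]) _
  constructor
  · -- entropy bound
    have key := core_estimate hR ha hl u 1 zero_le_one (fun _ => (1:ℝ)) continuous_const
      (fun s _ => by norm_num)
    simp only [one_mul] at key
    have hent : entropy γ (psiR R) ρ u - entropy γ (fun s => s ^ 2 / 2) ρ u =
        ρ * ((∫ s in (-1:ℝ)..1, psiR R (u + ρ ^ thetaExp γ * s) * (1 - s ^ 2) ^ lamExp γ) -
          ∫ s in (-1:ℝ)..1, ((u + ρ ^ thetaExp γ * s) ^ 2 / 2) * (1 - s ^ 2) ^ lamExp γ) := by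
      simp only [entropy]; ring
    rw [hent, abs_mul, abs_of_pos hρ]
    have hP : 0 ≤ ρ * (|u| + ρ ^ thetaExp γ) ^ 2 *
        ∫ s in {s : ℝ | s ∈ Set.Icc (-1 : ℝ) 1 ∧ R ≤ |u + ρ ^ thetaExp γ * s|},
          (1 - s ^ 2) ^ lamExp γ :=
      mul_nonneg (mul_nonneg hρ.le (sq_nonneg _)) hSnn
    calc ρ * |(∫ s in (-1:ℝ)..1, psiR R (u + ρ ^ thetaExp γ * s) * (1 - s ^ 2) ^ lamExp γ) -
          ∫ s in (-1:ℝ)..1, ((u + ρ ^ thetaExp γ * s) ^ 2 / 2) * (1 - s ^ 2) ^ lamExp γ|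
        ≤ ρ * ((|u| + ρ ^ thetaExp γ) ^ 2 / 2 *
          ∫ s in {s : ℝ | s ∈ Set.Icc (-1 : ℝ) 1 ∧ R ≤ |u + ρ ^ thetaExp γ * s|},
            (1 - s ^ 2) ^ lamExp γ) := by
          exact mul_le_mul_of_nonneg_left key hρ.le
    _ = 1 / 2 * (ρ * (|u| + ρ ^ thetaExp γ) ^ 2 *
          ∫ s in {s : ℝ | s ∈ Set.Icc (-1 : ℝ) 1 ∧ R ≤ |u + ρ ^ thetaExp γ * s|},
            (1 - s ^ 2) ^ lamExp γ) := by ring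
    _ ≤ (1 + thetaExp γ) * (ρ * (|u| + ρ ^ thetaExp γ) ^ 2 *
          ∫ s in {s : ℝ | s ∈ Set.Icc (-1 : ℝ) 1 ∧ R ≤ |u + ρ ^ thetaExp γ * s|},
            (1 - s ^ 2) ^ lamExp γ) :=
          mul_le_mul_of_nonneg_right (by linarith) hP
    _ = (1 + thetaExp γ) * ρ * (|u| + ρ ^ thetaExp γ) ^ 2 *
          ∫ s in {s : ℝ | s ∈ Set.Icc (-1 : ℝ) 1 ∧ R ≤ |u + ρ ^ thetaExp γ * s|},
            (1 - s ^ 2) ^ lamExp γ := by ring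
  · -- flux bound
    have hFb : ∀ s ∈ Set.Icc (-1:ℝ) 1,
        |u + thetaExp γ * ρ ^ thetaExp γ * s| ≤
          (1 + thetaExp γ) * (|u| + ρ ^ thetaExp γ) := by
      intro s hs
      have habs : |s| ≤ 1 := abs_le.mpr ⟨hs.1, hs.2⟩
      have h1 : |u + thetaExp γ * ρ ^ thetaExp γ * s| ≤
          |u| + thetaExp γ * ρ ^ thetaExp γ * |s| := by
        calc |u + thetaExp γ * ρ ^ thetaExp γ * s| ≤
            |u| + |thetaExp γ * ρ ^ thetaExp γ * s| := abs_add_le _ _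
        _ = |u| + thetaExp γ * ρ ^ thetaExp γ * |s| := by
            rw [abs_mul, abs_of_nonneg (mul_nonneg hθ.le ha.le)]
      have h2 : thetaExp γ * ρ ^ thetaExp γ * |s| ≤ thetaExp γ * ρ ^ thetaExp γ :=
        mul_le_of_le_one_right (mul_nonneg hθ.le ha.le) habs
      nlinarith [abs_nonneg u, mul_nonneg hθ.le (abs_nonneg u)]
    have hK : (0:ℝ) ≤ (1 + thetaExp γ) * (|u| + ρ ^ thetaExp γ) := by positivity
    have key := core_estimate hR ha hl u ((1 + thetaExp γ) * (|u| + ρ ^ thetaExp γ)) hK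
      (fun s => u + thetaExp γ * ρ ^ thetaExp γ * s)
      (continuous_const.add (continuous_const.mul continuous_id)) hFb
    have hflux : entropyFlux γ (psiR R) ρ u - entropyFlux γ (fun s => s ^ 2 / 2) ρ u =
        ρ * ((∫ s in (-1:ℝ)..1, (u + thetaExp γ * ρ ^ thetaExp γ * s) *
            psiR R (u + ρ ^ thetaExp γ * s) * (1 - s ^ 2) ^ lamExp γ) -
          ∫ s in (-1:ℝ)..1, (u + thetaExp γ * ρ ^ thetaExp γ * s) *
            ((u + ρ ^ thetaExp γ * s) ^ 2 / 2) * (1 - s ^ 2) ^ lamExp γ) := by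
      simp only [entropyFlux]; ring
    rw [hflux, abs_mul, abs_of_pos hρ]
    have key' := mul_le_mul_of_nonneg_left key hρ.le
    refine key'.trans ?_
    have hI := hSnn
    set I := ∫ s in {s : ℝ | s ∈ Set.Icc (-1 : ℝ) 1 ∧ R ≤ |u + ρ ^ thetaExp γ * s|},
        (1 - s ^ 2) ^ lamExp γ with hIdef
    set N := |u| + ρ ^ thetaExp γ with hNdef
    have expand : ρ * ((1 + thetaExp γ) * N * N ^ 2 / 2 * I) =
        (1 + thetaExp γ) / 2 * (ρ * N ^ 3 * I) := by ring
    rw [expand]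
    have target : (1 + thetaExp γ) * ρ * N ^ 3 * I = (1 + thetaExp γ) * (ρ * N ^ 3 * I) := by
      ring
    rw [target]
    have hP : 0 ≤ ρ * N ^ 3 * I := by positivity
    exact mul_le_mul_of_nonneg_right (by linarith) hP
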